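/- Let G and H be chain graphs with I(H) ⊆ I(G). For any component C of G, there exists a unique component of H that is maximal in H among the components of H containing a descendant of C in G. -/

import Mathlib

/-- A hybrid graph over a vertex set `V`: it has directed edges (`dir`) and
undirected edges (`undir`, stored as a symmetric irreflexive relation). -/
structure HybridGraph (V : Type) where
  dir : V → V → Prop
  undir : V → V → Prop
  dir_irrefl : ∀ x, ¬ dir x x
  undir_irrefl : ∀ x, ¬ undir x x
  undir_symm : ∀ x y, undir x y → undir y x

namespace HybridGraph

variable {V : Type}

/-- Two nodes are adjacent if joined by a directed or undirected edge. -/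
def adj (G : HybridGraph V) (x y : V) : Prop :=
  G.dir x y ∨ G.dir y x ∨ G.undir x y

/-- One step of a descending route: `x − y` or `x → y`. -/
def descStep (G : HybridGraph V) (x y : V) : Prop := G.dir x y ∨ G.undir x y

/-- `y` is a descendant of `x`: there is a descending route from `x` to `y`
(routes of length zero allowed). -/
def descendant (G : HybridGraph V) : V → V → Prop :=
  Relation.ReflTransGen G.descStep

/-- There is an undirected route between `x` and `y` (length zero allowed). -/
def uconn (G : HybridGraph V) : V → V → Prop :=
  Relation.ReflTransGen G.undir

/-- A chain is modeled by a function `f : V → ℕ` assigning each node the index of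
its block.  `G` is consistent with the chain `f` if directed edges go strictly
left-to-right and undirected edges stay within a block. -/
def ConsistentWith (G : HybridGraph V) (f : V → ℕ) : Prop :=
  (∀ x y, G.dir x y → f x < f y) ∧ (∀ x y, G.undir x y → f x = f y)

/-- A chain graph is a hybrid graph consistent with some chain. -/
def IsChainGraph (G : HybridGraph V) : Prop := ∃ f : V → ℕ, G.ConsistentWith f

/-- The component (maximal undirected-connected set) containing `x`. -/
def component (G : HybridGraph V) (x : V) : Set V := {y | G.uconn x y}

def IsComponent (G : HybridGraph V) (C : Set V) : Prop := ∃ x, C = G.component x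

/-- The descendants of a set of nodes. -/
def descendantsOf (G : HybridGraph V) (S : Set V) : Set V :=
  {y | ∃ x ∈ S, G.descendant x y}

/-- A component is terminal if its set of descendants is exactly itself. -/
def IsTerminal (G : HybridGraph V) (C : Set V) : Prop := G.descendantsOf C = C

/-- Parents of a set of nodes. -/
def Pa (G : HybridGraph V) (S : Set V) : Set V := {x | ∃ y ∈ S, G.dir x y}

/-- Neighbors of a set of nodes. -/
def nbr (G : HybridGraph V) (S : Set V) : Set V := {x | ∃ y ∈ S, G.undir x y}

/-- Boundary of a node: parents together with neighbors. -/
def Bd (G : HybridGraph V) (x : V) : Set V := {y | G.dir y x ∨ G.undir y x}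

inductive EdgeKind | fwd | bwd | und
deriving DecidableEq

/-- A route in `G` of length `n`: nodes `φ 0, …, φ n`, where the `i`-th edge is
directed forwards, directed backwards, or undirected according to `kind i`. -/
structure Route (G : HybridGraph V) where
  n : ℕ
  φ : ℕ → V
  kind : ℕ → EdgeKind
  valid : ∀ i < n,
    (kind i = EdgeKind.fwd → G.dir (φ i) (φ (i+1))) ∧
    (kind i = EdgeKind.bwd → G.dir (φ (i+1)) (φ i)) ∧
    (kind i = EdgeKind.und → G.undir (φ i) (φ (i+1)))

namespace Route

variable {G : HybridGraph V}

/-- Positions `a ≤ k ≤ b` form a collider section of the route: a maximal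
undirected subroute entered by an arrowhead on both sides. -/
def ColliderSec (ρ : Route G) (a b : ℕ) : Prop :=
  a ≤ b ∧ b < ρ.n ∧ 0 < a ∧
  (∀ i, a ≤ i → i < b → ρ.kind i = EdgeKind.und) ∧
  ρ.kind (a-1) = EdgeKind.fwd ∧ ρ.kind b = EdgeKind.bwd

/-- Position `k` lies in a collider section of the route. -/
def ColliderPos (ρ : Route G) (k : ℕ) : Prop :=
  ∃ a b, a ≤ k ∧ k ≤ b ∧ ρ.ColliderSec a b

/-- A route is `Z`-active when every collider section has a node in `Z` and every
non-collider section has no node in `Z`. -/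
def ZActive (ρ : Route G) (Z : Set V) : Prop :=
  (∀ a b, ρ.ColliderSec a b → ∃ k, a ≤ k ∧ k ≤ b ∧ ρ.φ k ∈ Z) ∧
  (∀ k, k ≤ ρ.n → ¬ ρ.ColliderPos k → ρ.φ k ∉ Z)

end Route

/-- Separation `X ⫫_G Y | Z`: no `Z`-active route between a node of `X` and a
node of `Y`. -/
def Sep (G : HybridGraph V) (X Y Z : Set V) : Prop :=
  ¬ ∃ ρ : Route G, ρ.φ 0 ∈ X ∧ ρ.φ ρ.n ∈ Y ∧ ρ.ZActive Z

/-- `I(H) ⊆ I(G)`: every separation statement of `H` is one of `G`. -/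
def ModelLe (H G : HybridGraph V) : Prop :=
  ∀ X Y Z : Set V, Disjoint X Y → Disjoint X Z → Disjoint Y Z →
    H.Sep X Y Z → G.Sep X Y Z

/-- Result of splitting the component `C` into `C \ L` and `L`: every undirected
edge from `C \ L` to `L` becomes directed towards `L`. -/
def splitGraph (G : HybridGraph V) (C L : Set V) : HybridGraph V where
  dir x y := G.dir x y ∨ (x ∈ C \ L ∧ y ∈ L ∧ G.undir x y)
  undir x y := G.undir x y ∧ ¬((x ∈ C \ L ∧ y ∈ L) ∨ (y ∈ C \ L ∧ x ∈ L))
  dir_irrefl := by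
    intro x h
    rcases h with h | ⟨hx, hy, _⟩
    · exact G.dir_irrefl x h
    · exact hx.2 hy
  undir_irrefl := fun x h => G.undir_irrefl x h.1
  undir_symm := by
    intro x y h
    exact ⟨G.undir_symm x y h.1, fun hc => h.2 (Or.symm hc)⟩

/-- `H` is obtained from `G` by a feasible split of a component `C` into the two
nonempty connected parts `C \ L` and `L`. -/
def IsFeasibleSplit (G H : HybridGraph V) : Prop :=
  ∃ C L : Set V, G.IsComponent C ∧ L ⊆ C ∧ L.Nonempty ∧ (C \ L).Nonempty ∧
    (∀ x ∈ L, ∀ y ∈ L, G.uconn x y) ∧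
    (∀ x ∈ C \ L, ∀ y ∈ C \ L, G.uconn x y) ∧
    (∀ x ∈ G.nbr L ∩ (C \ L), ∀ y ∈ G.nbr L ∩ (C \ L), x ≠ y → G.undir x y) ∧
    (∀ x ∈ G.Pa L, ∀ y ∈ G.nbr L ∩ (C \ L), G.dir x y) ∧
    H = G.splitGraph C L

/-- Result of merging the components `L` and `R`: every directed edge from `L`
to `R` becomes undirected. -/
def mergeGraph (G : HybridGraph V) (L R : Set V) : HybridGraph V where
  dir x y := G.dir x y ∧ ¬(x ∈ L ∧ y ∈ R)
  undir x y := G.undir x y ∨ (x ∈ L ∧ y ∈ R ∧ G.dir x y) ∨ (y ∈ L ∧ x ∈ R ∧ G.dir y x)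
  dir_irrefl := fun x h => G.dir_irrefl x h.1
  undir_irrefl := by
    intro x h
    rcases h with h | ⟨_, _, h⟩ | ⟨_, _, h⟩
    · exact G.undir_irrefl x h
    · exact G.dir_irrefl x h
    · exact G.dir_irrefl x h
  undir_symm := by
    intro x y h
    rcases h with h | h | h
    · exact Or.inl (G.undir_symm x y h)
    · exact Or.inr (Or.inr h)
    · exact Or.inr (Or.inl h)

/-- `H` is obtained from `G` by a feasible merging of two components `L`, `R`. -/
def IsFeasibleMerge (G H : HybridGraph V) : Prop :=
  ∃ L R : Set V, G.IsComponent L ∧ G.IsComponent R ∧ L ≠ R ∧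
    (G.Pa R ∩ L).Nonempty ∧
    (∀ x ∈ G.Pa R ∩ L, ∀ y ∈ G.Pa R ∩ L, x ≠ y → G.undir x y) ∧
    (∀ x ∈ G.Pa R \ L, ∀ y ∈ G.Pa R ∩ L, G.dir x y) ∧
    H = G.mergeGraph L R

/-- `H` is obtained from `G` by adding a single (previously absent) directed or
undirected edge between two distinct nodes. -/
def IsEdgeAddition (G H : HybridGraph V) : Prop :=
  ∃ a b : V, a ≠ b ∧
    ((¬ G.dir a b ∧ (H.dir = fun x y => G.dir x y ∨ (x = a ∧ y = b)) ∧
        H.undir = G.undir) ∨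
     (¬ G.undir a b ∧ H.dir = G.dir ∧
        (H.undir = fun x y => G.undir x y ∨ (x = a ∧ y = b) ∨ (x = b ∧ y = a))))

/-- `H` is obtained from `G` by removing a single directed or undirected edge. -/
def IsEdgeRemoval (G H : HybridGraph V) : Prop :=
  ∃ a b : V,
    (G.dir a b ∧ (H.dir = fun x y => G.dir x y ∧ ¬(x = a ∧ y = b)) ∧
       H.undir = G.undir) ∨
    (G.undir a b ∧ H.dir = G.dir ∧
       (H.undir = fun x y => G.undir x y ∧ ¬((x = a ∧ y = b) ∨ (x = b ∧ y = a))))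

end HybridGraph

open HybridGraph

variable {V : Type}

/-- `X`, `Y`, `Z`, `W` are pairwise disjoint. -/
def PairwiseDisj (X Y Z W : Set V) : Prop :=
  Disjoint X Y ∧ Disjoint X Z ∧ Disjoint X W ∧
  Disjoint Y Z ∧ Disjoint Y W ∧ Disjoint Z W

/-- A graphoid: an independence model closed under symmetry, decomposition,
weak union, contraction and intersection (for pairwise disjoint arguments). -/
structure Graphoid (V : Type) where
  ind : Set V → Set V → Set V → Prop
  symm : ∀ X Y Z : Set V, Disjoint X Y → Disjoint X Z → Disjoint Y Z →
    ind X Y Z → ind Y X Z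
  decomp : ∀ X Y W Z : Set V, PairwiseDisj X Y Z W → ind X (Y ∪ W) Z → ind X Y Z
  weakUnion : ∀ X Y W Z : Set V, PairwiseDisj X Y Z W → ind X (Y ∪ W) Z →
    ind X Y (Z ∪ W)
  contraction : ∀ X Y W Z : Set V, PairwiseDisj X Y Z W → ind X Y (Z ∪ W) →
    ind X W Z → ind X (Y ∪ W) Z
  inter : ∀ X Y W Z : Set V, PairwiseDisj X Y Z W → ind X Y (Z ∪ W) →
    ind X W (Z ∪ Y) → ind X (Y ∪ W) Z

/-- `G` is an independence map of the model `M`: `I(G) ⊆ M`. -/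
def IsIMap (G : HybridGraph V) (M : Set V → Set V → Set V → Prop) : Prop :=
  ∀ X Y Z : Set V, Disjoint X Y → Disjoint X Z → Disjoint Y Z →
    G.Sep X Y Z → M X Y Z

/-- `Gα` is a minimal independence map of `M` relative to the chain `f`. -/
def IsMinIMapRel (M : Set V → Set V → Set V → Prop) (f : V → ℕ)
    (Gα : HybridGraph V) : Prop :=
  Gα.ConsistentWith f ∧ IsIMap Gα M ∧
    ∀ H : HybridGraph V, IsEdgeRemoval Gα H → ¬ IsIMap H M

section Aux

namespace HybridGraph

variable {G : HybridGraph V}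

lemma uconn_symm' {x y : V} (h : G.uconn x y) : G.uconn y x := by
  induction h with
  | refl => exact .refl
  | tail _ h ih => exact Relation.ReflTransGen.head (G.undir_symm _ _ h) ih

lemma component_eq_of_uconn {x y : V} (h : G.uconn x y) : G.component x = G.component y := by
  ext z
  exact ⟨fun hz => (uconn_symm' h).trans hz, fun hz => h.trans hz⟩

lemma f_le_of_descendant {f : V → ℕ} (hf : G.ConsistentWith f) {x y : V}
    (h : G.descendant x y) : f x ≤ f y := by
  induction h with
  | refl => exact le_rfl
  | tail _ h ih =>
    rcases h with h | h
    · exact ih.trans (le_of_lt (hf.1 _ _ h))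
    · exact ih.trans (le_of_eq (hf.2 _ _ h))

lemma f_eq_of_uconn {f : V → ℕ} (hf : G.ConsistentWith f) {x y : V}
    (h : G.uconn x y) : f x = f y := by
  induction h with
  | refl => rfl
  | tail _ h ih => exact ih.trans (hf.2 _ _ h)

lemma uconn_of_descendant_of_f_eq {f : V → ℕ} (hf : G.ConsistentWith f) {x y : V}
    (h : G.descendant x y) (hfe : f x = f y) : G.uconn x y := by
  induction h using Relation.ReflTransGen.head_induction_on with
  | refl => exact .refl
  | @head a c h' htl ih =>
    have h1 : f c ≤ f y := f_le_of_descendant hf htl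
    rcases h' with hd | hu
    · exact absurd (lt_of_lt_of_le (hf.1 _ _ hd) h1) (by omega)
    · exact Relation.ReflTransGen.head hu (ih (by have := hf.2 _ _ hu; omega))

namespace Route

lemma desc_of_no_bwd (ρ : Route G) {l r : ℕ} (hlr : l ≤ r) (hr : r ≤ ρ.n)
    (h : ∀ j, l ≤ j → j < r → ρ.kind j ≠ EdgeKind.bwd) :
    G.descendant (ρ.φ l) (ρ.φ r) := by
  induction r, hlr using Nat.le_induction with
  | base => exact .refl
  | succ r hlr ih =>
    have hrn : r < ρ.n := by omega
    have ih' := ih (by omega) (fun j hj hj2 => h j hj (by omega))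
    have hstep : G.descStep (ρ.φ r) (ρ.φ (r + 1)) := by
      have hv := ρ.valid r hrn
      cases hk : ρ.kind r with
      | fwd => exact Or.inl (hv.1 hk)
      | bwd => exact absurd hk (h r hlr (by omega))
      | und => exact Or.inr (hv.2.2 hk)
    exact ih'.tail hstep

lemma desc_rev_of_no_fwd (ρ : Route G) {l : ℕ} (hl : l ≤ ρ.n)
    (h : ∀ j, j < l → ρ.kind j ≠ EdgeKind.fwd) :
    G.descendant (ρ.φ l) (ρ.φ 0) := by
  induction l with
  | zero => exact .refl
  | succ l ih =>
    have hln : l < ρ.n := by omega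
    have hstep : G.descStep (ρ.φ (l + 1)) (ρ.φ l) := by
      have hv := ρ.valid l hln
      cases hk : ρ.kind l with
      | fwd => exact absurd hk (h l (by omega))
      | bwd => exact Or.inl (hv.2.1 hk)
      | und => exact Or.inr (G.undir_symm _ _ (hv.2.2 hk))
    exact Relation.ReflTransGen.head hstep (ih (by omega) (fun j hj => h j (by omega)))

lemma collider_of_fwd_bwd (ρ : Route G) :
    ∀ d i j, j - i ≤ d → i < j → j < ρ.n → ρ.kind i = EdgeKind.fwd →
      ρ.kind j = EdgeKind.bwd → ∃ a b, ρ.ColliderSec a b ∧ i < a ∧ b ≤ j := by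
  intro d
  induction d with
  | zero => intro i j h1 h2 _ _ _; omega
  | succ d ih =>
    intro i j h1 h2 h3 hf hb
    by_cases hm : ∃ m, i < m ∧ m < j ∧ ρ.kind m ≠ EdgeKind.und
    · obtain ⟨m, hm1, hm2, hm3⟩ := hm
      cases hk : ρ.kind m with
      | fwd =>
        obtain ⟨a, b, hs, ha, hb'⟩ := ih m j (by omega) hm2 h3 hk hb
        exact ⟨a, b, hs, by omega, hb'⟩
      | bwd =>
        obtain ⟨a, b, hs, ha, hb'⟩ := ih i m (by omega) hm1 (by omega) hf hk
        exact ⟨a, b, hs, ha, by omega⟩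
      | und => exact absurd hk hm3
    · push_neg at hm
      refine ⟨i + 1, j, ⟨by omega, h3, by omega, ?_, ?_, hb⟩, by omega, le_refl j⟩
      · intro t ht1 ht2
        exact hm t (by omega) (by omega)
      · simpa using hf

lemma key_witness (ρ : Route G) {A : Set V} (hA : ρ.ZActive A) :
    ∃ k, k ≤ ρ.n ∧ ¬ ρ.ColliderPos k ∧ G.descendant (ρ.φ k) (ρ.φ 0) ∧
      (G.descendant (ρ.φ k) (ρ.φ ρ.n) ∨ ∃ a ∈ A, G.descendant (ρ.φ k) a) := by
  classical
  by_cases hcol : ∃ a, ∃ b, ρ.ColliderSec a b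
  · set a₀ := Nat.find hcol with ha₀def
    obtain ⟨b₀, hsec⟩ := Nat.find_spec hcol
    obtain ⟨hab, hbn, ha0, hint, hfwd, hbwd⟩ := hsec
    obtain ⟨p, hap, hpb, hpA⟩ := hA.1 a₀ b₀ ⟨hab, hbn, ha0, hint, hfwd, hbwd⟩
    have hP : ∃ k, ∀ j, k ≤ j → j < a₀ → ρ.kind j ≠ EdgeKind.bwd :=
      ⟨a₀, fun j h1 h2 => by omega⟩
    set k := Nat.find hP with hkdef
    have hk := Nat.find_spec hP
    have hka : k < a₀ := by
      have hP1 : ∀ j, a₀ - 1 ≤ j → j < a₀ → ρ.kind j ≠ EdgeKind.bwd := by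
        intro j h1 h2
        have hj : j = a₀ - 1 := by omega
        rw [hj, hfwd]
        decide
      have := Nat.find_min' hP hP1
      omega
    have hnofwd : ∀ j, j < k → ρ.kind j ≠ EdgeKind.fwd := by
      intro j hj hf
      have hnP := Nat.find_min hP hj
      push_neg at hnP
      obtain ⟨j', hjj', hj'a, hb'⟩ := hnP
      rcases eq_or_lt_of_le hjj' with heq | hlt
      · rw [← heq, hf] at hb'
        exact absurd hb' (by decide)
      · obtain ⟨a, b, hs, ha', hb''⟩ :=
          ρ.collider_of_fwd_bwd (j' - j) j j' le_rfl hlt (by omega) hf hb'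
        have hab' := hs.1
        exact Nat.find_min hcol (show a < a₀ by omega) ⟨b, hs⟩
    have hdesc0 : G.descendant (ρ.φ k) (ρ.φ 0) := ρ.desc_rev_of_no_fwd (by omega) hnofwd
    have hdka : G.descendant (ρ.φ k) (ρ.φ a₀) :=
      ρ.desc_of_no_bwd (by omega) (by omega) (fun j h1 h2 => hk j h1 h2)
    have hdap : G.descendant (ρ.φ a₀) (ρ.φ p) := by
      refine ρ.desc_of_no_bwd hap (by omega) (fun j h1 h2 => ?_)
      rw [hint j h1 (by omega)]
      decide
    have hnc : ¬ ρ.ColliderPos k := by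
      rintro ⟨a, b, hak, hkb, hs⟩
      have : a₀ ≤ a := Nat.find_min' hcol ⟨b, hs⟩
      omega
    exact ⟨k, by omega, hnc, hdesc0, Or.inr ⟨ρ.φ p, hpA, hdka.trans hdap⟩⟩
  · push_neg at hcol
    have hP : ∃ k, ∀ j, k ≤ j → j < ρ.n → ρ.kind j ≠ EdgeKind.bwd :=
      ⟨ρ.n, fun j h1 h2 => by omega⟩
    set k := Nat.find hP with hkdef
    have hk := Nat.find_spec hP
    have hkn : k ≤ ρ.n := Nat.find_min' hP (fun j h1 h2 => by omega)
    have hnofwd : ∀ j, j < k → ρ.kind j ≠ EdgeKind.fwd := by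
      intro j hj hf
      have hnP := Nat.find_min hP hj
      push_neg at hnP
      obtain ⟨j', hjj', hj'n, hb'⟩ := hnP
      rcases eq_or_lt_of_le hjj' with heq | hlt
      · rw [← heq, hf] at hb'
        exact absurd hb' (by decide)
      · obtain ⟨a, b, hs, _, _⟩ :=
          ρ.collider_of_fwd_bwd (j' - j) j j' le_rfl hlt hj'n hf hb'
        exact hcol a b hs
    exact ⟨k, hkn, fun ⟨a, b, _, _, hs⟩ => hcol a b hs, ρ.desc_rev_of_no_fwd hkn hnofwd,
      Or.inl (ρ.desc_of_no_bwd hkn le_rfl hk)⟩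

lemma route_cons (ρ : Route G) (a : V) (k0 : EdgeKind)
    (h1 : k0 = EdgeKind.fwd → G.dir a (ρ.φ 0))
    (h2 : k0 = EdgeKind.bwd → G.dir (ρ.φ 0) a)
    (h3 : k0 = EdgeKind.und → G.undir a (ρ.φ 0)) :
    ∃ ρ' : Route G, ρ'.n = ρ.n + 1 ∧ ρ'.φ 0 = a ∧ (∀ k, ρ'.φ (k + 1) = ρ.φ k) ∧
      ρ'.kind 0 = k0 ∧ (∀ i, ρ'.kind (i + 1) = ρ.kind i) := by
  refine ⟨⟨ρ.n + 1, fun k => match k with | 0 => a | k + 1 => ρ.φ k,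
    fun i => match i with | 0 => k0 | i + 1 => ρ.kind i, ?_⟩, rfl, rfl, fun k => rfl,
    rfl, fun i => rfl⟩
  intro i hi
  match i with
  | 0 => exact ⟨h1, h2, h3⟩
  | i + 1 => exact ρ.valid i (by omega)

lemma route_snoc (ρ : Route G) (a : V) (k0 : EdgeKind)
    (h1 : k0 = EdgeKind.fwd → G.dir (ρ.φ ρ.n) a)
    (h2 : k0 = EdgeKind.bwd → G.dir a (ρ.φ ρ.n))
    (h3 : k0 = EdgeKind.und → G.undir (ρ.φ ρ.n) a) :
    ∃ ρ' : Route G, ρ'.n = ρ.n + 1 ∧ (∀ k, k ≤ ρ.n → ρ'.φ k = ρ.φ k) ∧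
      ρ'.φ (ρ.n + 1) = a ∧ (∀ i, i < ρ.n → ρ'.kind i = ρ.kind i) ∧ ρ'.kind ρ.n = k0 := by
  refine ⟨⟨ρ.n + 1, fun k => if k ≤ ρ.n then ρ.φ k else a,
    fun i => if i < ρ.n then ρ.kind i else k0, ?_⟩, rfl, fun k hk => if_pos hk,
    if_neg (by omega), fun i hi => if_pos hi, if_neg (by omega)⟩
  intro i hi
  by_cases hin : i < ρ.n
  · rw [if_pos hin, if_pos (show i ≤ ρ.n by omega), if_pos (show i + 1 ≤ ρ.n by omega)]
    exact ρ.valid i hin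
  · have hieq : i = ρ.n := by omega
    rw [hieq, if_neg (lt_irrefl ρ.n), if_pos (le_refl ρ.n),
      if_neg (show ¬ ρ.n + 1 ≤ ρ.n by omega)]
    exact ⟨h1, h2, h3⟩

lemma route_append (ρ₁ ρ₂ : Route G) (hm : ρ₁.φ ρ₁.n = ρ₂.φ 0) :
    ∃ ρ : Route G, ρ.n = ρ₁.n + ρ₂.n ∧ (∀ k, k ≤ ρ₁.n → ρ.φ k = ρ₁.φ k) ∧
      (∀ k, ρ₁.n ≤ k → ρ.φ k = ρ₂.φ (k - ρ₁.n)) ∧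
      (∀ i, i < ρ₁.n → ρ.kind i = ρ₁.kind i) ∧
      (∀ i, ρ₁.n ≤ i → ρ.kind i = ρ₂.kind (i - ρ₁.n)) := by
  refine ⟨⟨ρ₁.n + ρ₂.n, fun k => if k < ρ₁.n then ρ₁.φ k else ρ₂.φ (k - ρ₁.n),
    fun i => if i < ρ₁.n then ρ₁.kind i else ρ₂.kind (i - ρ₁.n), ?_⟩, rfl, ?_, ?_, ?_, ?_⟩
  · intro i hi
    by_cases hin : i < ρ₁.n
    · have e2 : (if i + 1 < ρ₁.n then ρ₁.φ (i + 1) else ρ₂.φ (i + 1 - ρ₁.n)) = ρ₁.φ (i + 1) := by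
        by_cases h2 : i + 1 < ρ₁.n
        · rw [if_pos h2]
        · rw [if_neg h2, show i + 1 - ρ₁.n = 0 by omega, show i + 1 = ρ₁.n by omega]
          exact hm.symm
      rw [if_pos hin, if_pos hin, e2]
      exact ρ₁.valid i hin
    · rw [if_neg hin, if_neg hin, if_neg (show ¬ i + 1 < ρ₁.n by omega),
        show i + 1 - ρ₁.n = (i - ρ₁.n) + 1 by omega]
      exact ρ₂.valid (i - ρ₁.n) (by omega)
  · intro k hk
    dsimp only
    by_cases h : k < ρ₁.n
    · rw [if_pos h]
    · rw [if_neg h, show k - ρ₁.n = 0 by omega, show k = ρ₁.n by omega]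
      exact hm.symm
  · intro k hk
    dsimp only
    by_cases h : k < ρ₁.n
    · rw [if_pos h, show k = ρ₁.n by omega, show ρ₁.n - ρ₁.n = 0 by omega]
      exact hm
    · rw [if_neg h]
  · intro i hi
    dsimp only
    rw [if_pos hi]
  · intro i hi
    dsimp only
    rw [if_neg (by omega)]

end Route

lemma exists_route_of_descendant {c y : V} (h : G.descendant c y) :
    ∃ ρ : Route G, ρ.φ 0 = c ∧ ρ.φ ρ.n = y ∧ (∀ k, k ≤ ρ.n → G.descendant c (ρ.φ k)) ∧
      (∀ i, i < ρ.n → ρ.kind i ≠ EdgeKind.bwd) := by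
  induction h using Relation.ReflTransGen.head_induction_on with
  | refl =>
    exact ⟨⟨0, fun _ => y, fun _ => EdgeKind.und, fun i hi => absurd hi (Nat.not_lt_zero i)⟩, rfl, rfl,
      fun k _ => .refl, fun i hi => absurd hi (Nat.not_lt_zero i)⟩
  | @head a c' h' htl ih =>
    obtain ⟨ρ, h0, hn, hnodes, hkinds⟩ := ih
    rcases h' with hd | hu
    · have hstep' : G.descStep a c' := Or.inl hd
      obtain ⟨ρ', e_n, e0, eS, ek0, ekS⟩ :=
        ρ.route_cons a EdgeKind.fwd (fun _ => by rw [h0]; exact hd)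
          (fun hh => by exact absurd hh (by decide)) (fun hh => by exact absurd hh (by decide))
      refine ⟨ρ', e0, ?_, ?_, ?_⟩
      · rw [e_n, eS ρ.n, hn]
      · intro k hk
        match k with
        | 0 => rw [e0]; exact .refl
        | k + 1 =>
          rw [eS k]
          exact Relation.ReflTransGen.head hstep' (hnodes k (by omega))
      · intro i hi
        match i with
        | 0 => rw [ek0]; decide
        | i + 1 => rw [ekS i]; exact hkinds i (by omega)
    · have hstep' : G.descStep a c' := Or.inr hu
      obtain ⟨ρ', e_n, e0, eS, ek0, ekS⟩ :=
        ρ.route_cons a EdgeKind.und (fun hh => by exact absurd hh (by decide))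
          (fun hh => by exact absurd hh (by decide)) (fun _ => by rw [h0]; exact hu)
      refine ⟨ρ', e0, ?_, ?_, ?_⟩
      · rw [e_n, eS ρ.n, hn]
      · intro k hk
        match k with
        | 0 => rw [e0]; exact .refl
        | k + 1 =>
          rw [eS k]
          exact Relation.ReflTransGen.head hstep' (hnodes k (by omega))
      · intro i hi
        match i with
        | 0 => rw [ek0]; decide
        | i + 1 => rw [ekS i]; exact hkinds i (by omega)

lemma exists_route_of_uconn {c d : V} (h : G.uconn c d) :
    ∃ ρ : Route G, ρ.φ 0 = c ∧ ρ.φ ρ.n = d ∧ (∀ k, k ≤ ρ.n → G.uconn c (ρ.φ k)) ∧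
      (∀ i, i < ρ.n → ρ.kind i = EdgeKind.und) := by
  induction h using Relation.ReflTransGen.head_induction_on with
  | refl =>
    exact ⟨⟨0, fun _ => d, fun _ => EdgeKind.und, fun i hi => absurd hi (Nat.not_lt_zero i)⟩, rfl, rfl,
      fun k _ => .refl, fun i hi => absurd hi (Nat.not_lt_zero i)⟩
  | @head a c' h' htl ih =>
    obtain ⟨ρ, h0, hn, hnodes, hkinds⟩ := ih
    obtain ⟨ρ', e_n, e0, eS, ek0, ekS⟩ :=
      ρ.route_cons a EdgeKind.und (fun hh => by exact absurd hh (by decide))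
        (fun hh => by exact absurd hh (by decide)) (fun _ => by rw [h0]; exact h')
    refine ⟨ρ', e0, ?_, ?_, ?_⟩
    · rw [e_n, eS ρ.n, hn]
    · intro k hk
      match k with
      | 0 => rw [e0]; exact .refl
      | k + 1 =>
        rw [eS k]
        exact Relation.ReflTransGen.head h' (hnodes k (by omega))
    · intro i hi
      match i with
      | 0 => exact ek0
      | i + 1 => rw [ekS i]; exact hkinds i (by omega)

lemma exists_route_of_descendant_rev {c x : V} (h : G.descendant c x) :
    ∃ ρ : Route G, ρ.φ 0 = x ∧ ρ.φ ρ.n = c ∧ (∀ k, k ≤ ρ.n → G.descendant c (ρ.φ k)) ∧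
      (∀ i, i < ρ.n → ρ.kind i ≠ EdgeKind.fwd) := by
  induction h using Relation.ReflTransGen.head_induction_on with
  | refl =>
    exact ⟨⟨0, fun _ => x, fun _ => EdgeKind.und, fun i hi => absurd hi (Nat.not_lt_zero i)⟩, rfl, rfl,
      fun k _ => .refl, fun i hi => absurd hi (Nat.not_lt_zero i)⟩
  | @head a c' h' htl ih =>
    obtain ⟨ρ, h0, hn, hnodes, hkinds⟩ := ih
    rcases h' with hd | hu
    · obtain ⟨ρ', e_n, eK, eLast, ekK, ekLast⟩ :=
        ρ.route_snoc a EdgeKind.bwd (fun hh => by exact absurd hh (by decide))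
          (fun _ => by rw [hn]; exact hd) (fun hh => by exact absurd hh (by decide))
      refine ⟨ρ', ?_, ?_, ?_, ?_⟩
      · rw [eK 0 (Nat.zero_le _), h0]
      · rw [e_n, eLast]
      · intro k hk
        by_cases hkn : k ≤ ρ.n
        · rw [eK k hkn]
          exact Relation.ReflTransGen.head (Or.inl hd) (hnodes k hkn)
        · have : k = ρ.n + 1 := by omega
          rw [this, eLast]
          exact .refl
      · intro i hi
        by_cases hin : i < ρ.n
        · rw [ekK i hin]; exact hkinds i hin
        · have : i = ρ.n := by omega
          rw [this, ekLast]; decide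
    · obtain ⟨ρ', e_n, eK, eLast, ekK, ekLast⟩ :=
        ρ.route_snoc a EdgeKind.und (fun hh => by exact absurd hh (by decide))
          (fun hh => by exact absurd hh (by decide))
          (fun _ => by rw [hn]; exact G.undir_symm _ _ hu)
      refine ⟨ρ', ?_, ?_, ?_, ?_⟩
      · rw [eK 0 (Nat.zero_le _), h0]
      · rw [e_n, eLast]
      · intro k hk
        by_cases hkn : k ≤ ρ.n
        · rw [eK k hkn]
          exact Relation.ReflTransGen.head (Or.inr hu) (hnodes k hkn)
        · have : k = ρ.n + 1 := by omega
          rw [this, eLast]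
          exact .refl
      · intro i hi
        by_cases hin : i < ρ.n
        · rw [ekK i hin]; exact hkinds i hin
        · have : i = ρ.n := by omega
          rw [this, ekLast]; decide

lemma not_sep_T {C : Set V} (hC : G.IsComponent C) {x y : V}
    (hx : x ∈ G.descendantsOf C) (hy : y ∈ G.descendantsOf C) (Z : Set V)
    (hZ : ∀ z ∈ Z, z ∉ G.descendantsOf C) : ¬ G.Sep {x} {y} Z := by
  obtain ⟨x₀, rfl⟩ := hC
  obtain ⟨cx, hcx, hdx⟩ := hx
  obtain ⟨cy, hcy, hdy⟩ := hy
  have huxy : G.uconn cx cy := (uconn_symm' hcx).trans hcy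
  obtain ⟨ρL, hL0, hLn, hLnodes, hLkinds⟩ := exists_route_of_descendant_rev hdx
  obtain ⟨ρM, hM0, hMn, hMnodes, hMkinds⟩ := exists_route_of_uconn huxy
  obtain ⟨ρR, hR0, hRn, hRnodes, hRkinds⟩ := exists_route_of_descendant hdy
  obtain ⟨ρ₁, e₁n, e₁L, e₁R, ek₁L, ek₁R⟩ := ρL.route_append ρM (by rw [hLn, hM0])
  have h₁0 : ρ₁.φ 0 = x := by rw [e₁L 0 (Nat.zero_le _), hL0]
  have h₁n : ρ₁.φ ρ₁.n = cy := by
    rw [e₁R ρ₁.n (by omega), e₁n, show ρL.n + ρM.n - ρL.n = ρM.n by omega, hMn]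
  have h₁nodes : ∀ k, k ≤ ρ₁.n → ρ₁.φ k ∈ G.descendantsOf (G.component x₀) := by
    intro k hk
    by_cases hkL : k ≤ ρL.n
    · rw [e₁L k hkL]
      exact ⟨cx, hcx, hLnodes k hkL⟩
    · rw [e₁R k (by omega)]
      refine ⟨cx, hcx, Relation.ReflTransGen.mono (fun a b hab => (Or.inr hab : G.descStep a b)) _ _
        (hMnodes (k - ρL.n) (by omega))⟩
  have h₁kinds : ∀ i, i < ρ₁.n → ρ₁.kind i ≠ EdgeKind.fwd := by
    intro i hi
    by_cases hiL : i < ρL.n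
    · rw [ek₁L i hiL]; exact hLkinds i hiL
    · rw [ek₁R i (by omega), hMkinds (i - ρL.n) (by omega)]; decide
  obtain ⟨ρ, en, eL, eR, ekL, ekR⟩ := ρ₁.route_append ρR (by rw [h₁n, hR0])
  have h0 : ρ.φ 0 = x := by rw [eL 0 (Nat.zero_le _), h₁0]
  have hend : ρ.φ ρ.n = y := by
    rw [eR ρ.n (by omega), en, show ρ₁.n + ρR.n - ρ₁.n = ρR.n by omega, hRn]
  have hnodes : ∀ k, k ≤ ρ.n → ρ.φ k ∈ G.descendantsOf (G.component x₀) := by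
    intro k hk
    by_cases hk1 : k ≤ ρ₁.n
    · rw [eL k hk1]
      exact h₁nodes k hk1
    · rw [eR k (by omega)]
      exact ⟨cy, hcy, hRnodes (k - ρ₁.n) (by omega)⟩
  have hnocol : ∀ a b, ¬ ρ.ColliderSec a b := by
    rintro a b ⟨hab, hbn, ha0, hint, hfwd, hbwd⟩
    by_cases haL : a - 1 < ρ₁.n
    · rw [ekL (a - 1) haL] at hfwd
      exact h₁kinds (a - 1) haL hfwd
    · have hb1 : ρ₁.n ≤ b := by omega
      rw [ekR b hb1] at hbwd
      exact hRkinds (b - ρ₁.n) (by omega) hbwd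
  intro hsep
  refine hsep ⟨ρ, ?_, ?_, ?_, ?_⟩
  · exact h0
  · exact hend
  · intro a b hs
    exact absurd hs (hnocol a b)
  · intro k hk _ hkZ
    exact hZ _ hkZ (hnodes k hk)

end HybridGraph

end Aux

/-- if `I(H) ⊆ I(G)`, then for any component `C` of `G` there is a
unique component of `H` that is maximal in `H` among those components of `H`
containing a descendant of `C` in `G`. -/
theorem exists_unique_maximal_component [Fintype V] (G H : HybridGraph V)
    (hG : G.IsChainGraph) (hH : H.IsChainGraph) (hle : ModelLe H G)
    (C : Set V) (hC : G.IsComponent C) :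
    ∃! D : Set V,
      D ∈ {D' | H.IsComponent D' ∧ ∃ d ∈ D', ∃ c ∈ C, G.descendant c d} ∧
      ∀ x ∈ D,
        ¬ ∃ y ∈ ⋃₀ ({D' | H.IsComponent D' ∧ ∃ d ∈ D', ∃ c ∈ C, G.descendant c d} \ {D}),
          H.descendant y x := by
  classical
  obtain ⟨f, hf⟩ := hH
  set S := {D' | H.IsComponent D' ∧ ∃ d ∈ D', ∃ c ∈ C, G.descendant c d} with hSdef
  set T := G.descendantsOf C with hTdef
  have hTS : ∀ d, d ∈ T → H.component d ∈ S := by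
    intro d hd
    exact ⟨⟨d, rfl⟩, d, Relation.ReflTransGen.refl, hd⟩
  -- uniqueness of maximal components
  have key2 : ∀ D₁ D₂ : Set V,
      (D₁ ∈ S ∧ ∀ x ∈ D₁, ¬ ∃ y ∈ ⋃₀ (S \ {D₁}), H.descendant y x) →
      (D₂ ∈ S ∧ ∀ x ∈ D₂, ¬ ∃ y ∈ ⋃₀ (S \ {D₂}), H.descendant y x) → D₁ = D₂ := by
    rintro D₁ D₂ ⟨hD₁S, hmax₁⟩ ⟨hD₂S, hmax₂⟩
    by_contra hne
    obtain ⟨hcomp₁, d₁, hd₁D, c₁, hc₁, hdc₁⟩ := hD₁S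
    obtain ⟨hcomp₂, d₂, hd₂D, c₂, hc₂, hdc₂⟩ := hD₂S
    have hD₁S : D₁ ∈ S := ⟨hcomp₁, d₁, hd₁D, c₁, hc₁, hdc₁⟩
    have hD₂S : D₂ ∈ S := ⟨hcomp₂, d₂, hd₂D, c₂, hc₂, hdc₂⟩
    have hd₁T : d₁ ∈ T := ⟨c₁, hc₁, hdc₁⟩
    have hd₂T : d₂ ∈ T := ⟨c₂, hc₂, hdc₂⟩
    have hdne : d₁ ≠ d₂ := by
      rintro rfl
      obtain ⟨w₁, rfl⟩ := hcomp₁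
      obtain ⟨w₂, rfl⟩ := hcomp₂
      exact hne (by
        rw [HybridGraph.component_eq_of_uconn (hd₁D : H.uconn w₁ d₁),
          HybridGraph.component_eq_of_uconn (hd₂D : H.uconn w₂ d₁)])
    set A := {m | (∃ x ∈ D₁, H.descendant m x) ∧ ∃ y ∈ D₂, H.descendant m y} with hAdef
    have hAT : ∀ m ∈ A, m ∉ T := by
      rintro m ⟨⟨x, hxD, hmx⟩, ⟨y, hyD, hmy⟩⟩ hmT
      have hmS : H.component m ∈ S := hTS m hmT
      have hmem : m ∈ H.component m := Relation.ReflTransGen.refl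
      have h1 : H.component m = D₁ := by
        by_contra hne1
        exact hmax₁ x hxD ⟨m, Set.mem_sUnion.mpr ⟨H.component m, ⟨hmS, hne1⟩, hmem⟩, hmx⟩
      have h2 : H.component m = D₂ := by
        by_contra hne2
        exact hmax₂ y hyD ⟨m, Set.mem_sUnion.mpr ⟨H.component m, ⟨hmS, hne2⟩, hmem⟩, hmy⟩
      exact hne (h1.symm.trans h2)
    have hnsep : ¬ G.Sep {d₁} {d₂} A :=
      HybridGraph.not_sep_T hC hd₁T hd₂T A (fun z hz => hAT z hz)
    have hHsep : ¬ H.Sep {d₁} {d₂} A := by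
      intro hs
      refine hnsep (hle _ _ _ ?_ ?_ ?_ hs)
      · exact Set.disjoint_singleton.mpr hdne
      · exact Set.disjoint_left.mpr
          (fun a ha haA => hAT a haA ((Set.eq_of_mem_singleton ha) ▸ hd₁T))
      · exact Set.disjoint_left.mpr
          (fun a ha haA => hAT a haA ((Set.eq_of_mem_singleton ha) ▸ hd₂T))
    obtain ⟨ρ, hρ0, hρn, hρA⟩ := not_not.mp hHsep
    rw [Set.mem_singleton_iff] at hρ0 hρn
    obtain ⟨k, hk, hknc, hdesc0, hdescn⟩ := ρ.key_witness hρA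
    have hkA : ρ.φ k ∈ A := by
      refine ⟨⟨d₁, hd₁D, hρ0 ▸ hdesc0⟩, ?_⟩
      rcases hdescn with h | ⟨a, haA, hda⟩
      · exact ⟨d₂, hd₂D, hρn ▸ h⟩
      · obtain ⟨y, hyD, hay⟩ := haA.2
        exact ⟨y, hyD, hda.trans hay⟩
    exact hρA.2 k hk hknc hkA
  -- existence of a maximal component
  obtain ⟨x₀, hCeq⟩ := hC
  have hx₀C : x₀ ∈ C := by rw [hCeq]; exact Relation.ReflTransGen.refl
  have hx₀T : x₀ ∈ T := ⟨x₀, hx₀C, Relation.ReflTransGen.refl⟩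
  have hTne : (f '' T).Nonempty := ⟨f x₀, x₀, hx₀T, rfl⟩
  obtain ⟨dm, hdmT, hdmf⟩ := Nat.sInf_mem hTne
  have hmin : ∀ d ∈ T, f dm ≤ f d := by
    intro d hd
    rw [hdmf]
    exact Nat.sInf_le ⟨d, hd, rfl⟩
  set Dm := H.component dm with hDmdef
  have hDmS : Dm ∈ S := hTS dm hdmT
  have hDmmax : ∀ x ∈ Dm, ¬ ∃ y ∈ ⋃₀ (S \ {Dm}), H.descendant y x := by
    rintro x hx ⟨y, hyU, hdyx⟩
    obtain ⟨D', hD'mem, hyD'⟩ := Set.mem_sUnion.mp hyU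
    obtain ⟨hD'S, hD'ne⟩ := hD'mem
    obtain ⟨hD'c, d', hd'D', hd'T⟩ := hD'S
    obtain ⟨w', rfl⟩ := hD'c
    have h1 : f y = f d' :=
      HybridGraph.f_eq_of_uconn hf ((HybridGraph.uconn_symm' hyD').trans hd'D')
    have h2 : f dm = f x := HybridGraph.f_eq_of_uconn hf hx
    have h3 : f y ≤ f x := HybridGraph.f_le_of_descendant hf hdyx
    have h4 : f dm ≤ f d' := hmin d' hd'T
    have h5 : f y = f x := by omega
    have h6 : H.uconn y x := HybridGraph.uconn_of_descendant_of_f_eq hf hdyx h5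
    refine hD'ne ?_
    rw [Set.mem_singleton_iff, HybridGraph.component_eq_of_uconn (hyD' : H.uconn w' y),
      HybridGraph.component_eq_of_uconn h6, hDmdef,
      HybridGraph.component_eq_of_uconn (hx : H.uconn dm x)]
  exact ⟨Dm, ⟨hDmS, hDmmax⟩, fun D' hD' => key2 D' Dm hD' ⟨hDmS, hDmmax⟩⟩
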